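/- Compatibility of two marginals with a global pure state: Let a, b ≥ 1 and let ρ₁ : Matrix (Fin a) (Fin a) ℂ and ρ₂ : Matrix (Fin b) (Fin b) ℂ be density matrices. Then the following are equivalent: (i) there exists a unit vector ψ : Fin a × Fin b → ℂ (with ∑ over (i,j) of ‖ψ (i,j)‖^2 = 1) such that ρ₁ i i' = ∑ j, ψ (i,j) * conj (ψ (i',j)) and ρ₂ j j' = ∑ i, ψ (i,j) * conj (ψ (i,j')); (ii) X^b * Matrix.charpoly ρ₁ = X^a * Matrix.charpoly ρ₂ in ℂ[X], i.e. ρ₁ and ρ₂ have the same nonzero eigenvalues with the same multiplicities. -/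

import Mathlib

open scoped BigOperators
open ComplexOrder

section Aux
open Polynomial Matrix Finset

lemma aux_coe : (RCLike.ofReal : ℝ → ℂ) = Complex.ofReal := rfl

lemma aux_charpoly_mul {R : Type*} [CommRing R] {m n : Type*} [Fintype m] [DecidableEq m]
    [Fintype n] [DecidableEq n] (A : Matrix m n R) (B : Matrix n m R) :
    X ^ Fintype.card n * (A * B).charpoly = X ^ Fintype.card m * (B * A).charpoly := by
  classical
  set A' := A.map (C : R →+* R[X]) with hA'
  set B' := B.map (C : R →+* R[X]) with hB'
  set U : Matrix (m ⊕ n) (m ⊕ n) R[X] := fromBlocks (scalar m X) A' B' 1 with hU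
  set V : Matrix (m ⊕ n) (m ⊕ n) R[X] := fromBlocks 1 0 (-B') (scalar n X) with hV
  have hscm : ∀ (M : Matrix n m R[X]), (scalar n X : Matrix n n R[X]) * M = M * (scalar m X : Matrix m m R[X]) := by
    intro M; ext i j; simp [scalar_apply, diagonal_mul, mul_diagonal, mul_comm]
  have hmapmul : A' * B' = (A * B).map (C : R →+* R[X]) := by
    rw [hA', hB', Matrix.map_mul]
  have hmapmul' : B' * A' = (B * A).map (C : R →+* R[X]) := by
    rw [hA', hB', Matrix.map_mul]
  have e11 : scalar m X * (1 : Matrix m m R[X]) + A' * (-B') = charmatrix (A * B) := by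
    rw [charmatrix, mul_one, Matrix.mul_neg, hmapmul, ← sub_eq_add_neg]; rfl
  have e21 : B' * (1 : Matrix m m R[X]) + (1 : Matrix n n R[X]) * (-B') = (0 : Matrix n m R[X]) := by
    simp
  have e21' : (-B') * (scalar m X : Matrix m m R[X]) + (scalar n X : Matrix n n R[X]) * B' = (0 : Matrix n m R[X]) := by
    rw [hscm B', Matrix.neg_mul, neg_add_cancel]
  have e22' : (-B') * A' + scalar n X * (1 : Matrix n n R[X]) = charmatrix (B * A) := by
    rw [Matrix.neg_mul, hmapmul', charmatrix, mul_one, neg_add_eq_sub]; rfl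
  have hUV : U * V = fromBlocks (charmatrix (A * B)) (scalar m X * (0 : Matrix m n R[X]) + A' * scalar n X) 0 (scalar n X) := by
    rw [hU, hV, fromBlocks_multiply, e11, e21]
    congr 1 <;> simp
  have hVU : V * U = fromBlocks (scalar m X) ((1 : Matrix m m R[X]) * A' + (0 : Matrix m n R[X]) * (1 : Matrix n n R[X])) 0 (charmatrix (B * A)) := by
    rw [hU, hV, fromBlocks_multiply, e21', e22']
    congr 1 <;> simp
  have h1 : (U * V).det = (V * U).det := by
    rw [Matrix.det_mul, Matrix.det_mul, mul_comm]
  rw [hUV, hVU, det_fromBlocks_zero₂₁, det_fromBlocks_zero₂₁] at h1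
  have hdm : (scalar m X).det = (X : R[X]) ^ Fintype.card m := by
    simp [scalar_apply, det_diagonal]
  have hdn : (scalar n X).det = (X : R[X]) ^ Fintype.card n := by
    simp [scalar_apply, det_diagonal]
  rw [hdm, hdn] at h1
  rw [Matrix.charpoly, Matrix.charpoly, mul_comm ((X : R[X]) ^ Fintype.card n), h1]

variable {n : Type*} [Fintype n] [DecidableEq n]

lemma aux_charpoly_mul_comm (A B : Matrix n n ℂ) : (A * B).charpoly = (B * A).charpoly := by
  have h := aux_charpoly_mul A B
  exact mul_left_cancel₀ (pow_ne_zero _ X_ne_zero) h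

lemma aux_charpoly_diagonal (d : n → ℂ) :
    (Matrix.diagonal d).charpoly = ∏ i, (X - C (d i)) := by
  rw [Matrix.charpoly, charmatrix]
  have : Matrix.scalar n (X : ℂ[X]) - (C : ℂ →+* ℂ[X]).mapMatrix (diagonal d)
      = diagonal (fun i => X - C (d i)) := by
    ext i j
    by_cases h : i = j <;> simp [h, scalar_apply, diagonal_apply]
  rw [this, det_diagonal]

lemma aux_charpoly_transpose (A : Matrix n n ℂ) :
    A.transpose.charpoly = A.charpoly := by
  rw [Matrix.charpoly, Matrix.charpoly, ← Matrix.det_transpose (charmatrix A)]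
  congr 1
  ext i j
  by_cases h : i = j <;> simp [h, charmatrix, scalar_apply, diagonal_apply, transpose_apply, Ne.symm]

lemma aux_unitary_col_orthonormal (U : Matrix n n ℂ) (hU : star U * U = 1) (k k' : n) :
    ∑ i, (starRingEnd ℂ) (U i k) * U i k' = if k = k' then 1 else 0 := by
  have := congrFun (congrFun hU k) k'
  rw [Matrix.mul_apply] at this
  simpa [Matrix.star_apply, Matrix.one_apply, eq_comm] using this

lemma aux_spectral_entry {A : Matrix n n ℂ} (hA : A.IsHermitian) (i i' : n) :
    A i i' = ∑ k, (hA.eigenvalues k : ℂ) * (hA.eigenvectorUnitary : Matrix n n ℂ) i k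
      * (starRingEnd ℂ) ((hA.eigenvectorUnitary : Matrix n n ℂ) i' k) := by
  conv_lhs => rw [hA.spectral_theorem, Unitary.conjStarAlgAut_apply]
  rw [Matrix.mul_apply]
  congr 1; ext k
  rw [Matrix.mul_apply, Finset.sum_mul]
  rw [Finset.sum_eq_single k]
  · simp only [Matrix.diagonal_apply, if_pos rfl, Matrix.star_apply, Matrix.conjTranspose_apply,
      Function.comp_apply, Complex.star_def, aux_coe, if_true]
    ring
  · intro b _ hb
    simp only [Matrix.diagonal_apply, if_neg hb, zero_mul, mul_zero]
  · simp

lemma aux_charpoly_hermitian {A : Matrix n n ℂ} (hA : A.IsHermitian) :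
    A.charpoly = ∏ k, (X - C ((hA.eigenvalues k : ℂ))) := by
  conv_lhs => rw [hA.spectral_theorem, Unitary.conjStarAlgAut_apply]
  have h := aux_charpoly_mul_comm
    ((hA.eigenvectorUnitary : Matrix n n ℂ) * diagonal (RCLike.ofReal ∘ hA.eigenvalues))
    (star (hA.eigenvectorUnitary : Matrix n n ℂ))
  rw [← Matrix.mul_assoc] at h
  rw [h, show star (hA.eigenvectorUnitary : Matrix n n ℂ) * (hA.eigenvectorUnitary : Matrix n n ℂ)
      = 1 from Unitary.coe_star_mul_self hA.eigenvectorUnitary, Matrix.one_mul,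
    aux_charpoly_diagonal]
  rfl

lemma aux_multiset_ofFn {m : ℕ} {α : Type*} (f : Fin m → α) :
    Multiset.map f Finset.univ.val = ↑(List.ofFn f) := by
  rw [List.ofFn_eq_map]
  rfl

lemma aux_exists_perm {ν : Type*} [Fintype ν] [DecidableEq ν] (f g : ν → ℝ)
    (h : Multiset.map f Finset.univ.val = Multiset.map g Finset.univ.val) :
    ∃ π : Equiv.Perm ν, ∀ k, f k = g (π k) := by
  classical
  obtain ⟨m, e⟩ : ∃ m, Nonempty (ν ≃ Fin m) := ⟨Fintype.card ν, ⟨Fintype.equivFin ν⟩⟩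
  obtain ⟨e⟩ := e
  set f' : Fin m → ℝ := f ∘ e.symm with hf'
  set g' : Fin m → ℝ := g ∘ e.symm with hg'
  have hmf : Multiset.map f' Finset.univ.val = Multiset.map f Finset.univ.val := by
    rw [hf', ← Multiset.map_map, Multiset.map_univ_val_equiv]
  have hmg : Multiset.map g' Finset.univ.val = Multiset.map g Finset.univ.val := by
    rw [hg', ← Multiset.map_map, Multiset.map_univ_val_equiv]
  have key : f' ∘ Tuple.sort f' = g' ∘ Tuple.sort g' := by
    apply List.ofFn_injective
    apply List.Perm.eq_of_sortedLE (Tuple.monotone_sort f').sortedLE_ofFn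
      (Tuple.monotone_sort g').sortedLE_ofFn
    have h1 : (List.ofFn (f' ∘ Tuple.sort f')).Perm (List.ofFn f') :=
      (Tuple.sort f').ofFn_comp_perm f'
    have h2 : (List.ofFn (g' ∘ Tuple.sort g')).Perm (List.ofFn g') :=
      (Tuple.sort g').ofFn_comp_perm g'
    refine h1.trans (List.Perm.trans ?_ h2.symm)
    rw [← Multiset.coe_eq_coe, ← aux_multiset_ofFn, ← aux_multiset_ofFn, hmf, hmg, h]
  refine ⟨(e.trans ((Tuple.sort f').symm.trans ((Tuple.sort g').trans e.symm))), fun k => ?_⟩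
  have := congrFun key ((Tuple.sort f').symm (e k))
  simpa [hf', hg'] using this

lemma aux_sum_gram {K J : Type*} [Fintype K] [DecidableEq K] [Fintype J]
    (c : K → J → ℂ) (ν : K → ℂ)
    (hG : ∀ k k', ∑ j, c k j * (starRingEnd ℂ) (c k' j) = if k = k' then ν k else 0)
    (f g : K → ℂ) :
    ∑ j, (∑ k, f k * c k j) * (starRingEnd ℂ) (∑ k', g k' * c k' j)
      = ∑ k, ν k * (f k * (starRingEnd ℂ) (g k)) := by
  have step1 : ∀ j : J, (∑ k, f k * c k j) * (starRingEnd ℂ) (∑ k', g k' * c k' j)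
      = ∑ k, ∑ k', (f k * (starRingEnd ℂ) (g k')) * (c k j * (starRingEnd ℂ) (c k' j)) := by
    intro j
    rw [map_sum, Finset.sum_mul_sum]
    refine Finset.sum_congr rfl fun k _ => Finset.sum_congr rfl fun k' _ => ?_
    rw [_root_.map_mul]; ring
  calc ∑ j, (∑ k, f k * c k j) * (starRingEnd ℂ) (∑ k', g k' * c k' j)
      = ∑ j, ∑ k, ∑ k', (f k * (starRingEnd ℂ) (g k')) * (c k j * (starRingEnd ℂ) (c k' j)) :=
        Finset.sum_congr rfl fun j _ => step1 j
    _ = ∑ k, ∑ k', ∑ j, (f k * (starRingEnd ℂ) (g k')) * (c k j * (starRingEnd ℂ) (c k' j)) := by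
        rw [Finset.sum_comm]
        exact Finset.sum_congr rfl fun k _ => Finset.sum_comm
    _ = ∑ k, ∑ k', (f k * (starRingEnd ℂ) (g k')) * ∑ j, (c k j * (starRingEnd ℂ) (c k' j)) := by
        refine Finset.sum_congr rfl fun k _ => Finset.sum_congr rfl fun k' _ => ?_
        rw [Finset.mul_sum]
    _ = ∑ k, ν k * (f k * (starRingEnd ℂ) (g k)) := by
        refine Finset.sum_congr rfl fun k _ => ?_
        rw [Finset.sum_eq_single k]
        · rw [hG, if_pos rfl]; ring
        · intro k' _ hk'; rw [hG, if_neg (Ne.symm hk'), mul_zero]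
        · intro h; exact absurd (Finset.mem_univ k) h

end Aux

theorem stmt9 (a b : ℕ) (ha : 1 ≤ a) (hb : 1 ≤ b)
    (ρ₁ : Matrix (Fin a) (Fin a) ℂ) (ρ₂ : Matrix (Fin b) (Fin b) ℂ)
    (h₁ : ρ₁.PosSemidef) (ht₁ : ρ₁.trace = 1)
    (h₂ : ρ₂.PosSemidef) (ht₂ : ρ₂.trace = 1) :
    (∃ ψ : Fin a × Fin b → ℂ,
        (∑ u, ‖ψ u‖ ^ 2 = 1) ∧
        (∀ i i', ρ₁ i i' = ∑ j, ψ (i, j) * (starRingEnd ℂ) (ψ (i', j))) ∧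
        (∀ j j', ρ₂ j j' = ∑ i, ψ (i, j) * (starRingEnd ℂ) (ψ (i, j')))) ↔
      Polynomial.X ^ b * ρ₁.charpoly = Polynomial.X ^ a * ρ₂.charpoly := by
  classical
  open Polynomial Matrix Finset in
  constructor
  · rintro ⟨ψ, -, hr1, hr2⟩
    set M : Matrix (Fin a) (Fin b) ℂ := Matrix.of (fun i j => ψ (i, j)) with hM
    have hM1 : ρ₁ = M * Mᴴ := by
      ext i i'
      rw [Matrix.mul_apply]
      simpa [hM, Matrix.conjTranspose_apply] using hr1 i i'
    have hM2 : Mᴴ * M = ρ₂.transpose := by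
      ext j j'
      rw [Matrix.mul_apply, Matrix.transpose_apply, hr2 j' j]
      refine Finset.sum_congr rfl fun i _ => ?_
      simp [hM, Matrix.conjTranspose_apply]
      ring
    have hK := aux_charpoly_mul M Mᴴ
    rw [Fintype.card_fin, Fintype.card_fin, ← hM1, hM2, aux_charpoly_transpose] at hK
    exact hK
  · intro hpoly
    set lam : Fin a → ℝ := h₁.1.eigenvalues with hlam
    set mu : Fin b → ℝ := h₂.1.eigenvalues with hmu
    set U : Matrix (Fin a) (Fin a) ℂ := (h₁.1.eigenvectorUnitary : Matrix (Fin a) (Fin a) ℂ) with hUdef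
    set V : Matrix (Fin b) (Fin b) ℂ := (h₂.1.eigenvectorUnitary : Matrix (Fin b) (Fin b) ℂ) with hVdef
    set ν₁ : Fin a ⊕ Fin b → ℝ := Sum.elim lam (fun _ => 0) with hν₁def
    set ν₂ : Fin a ⊕ Fin b → ℝ := Sum.elim (fun _ => 0) mu with hν₂def
    have hP1 : X ^ b * ρ₁.charpoly = ∏ k : Fin a ⊕ Fin b, (X - C ((ν₁ k : ℝ) : ℂ)) := by
      rw [aux_charpoly_hermitian h₁.1, Fintype.prod_sum_type]
      simp only [hν₁def, Sum.elim_inl, Sum.elim_inr, Complex.ofReal_zero, map_zero, sub_zero,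
        Finset.prod_const, Finset.card_univ, Fintype.card_fin]
      rw [mul_comm]
    have hP2 : X ^ a * ρ₂.charpoly = ∏ k : Fin a ⊕ Fin b, (X - C ((ν₂ k : ℝ) : ℂ)) := by
      rw [aux_charpoly_hermitian h₂.1, Fintype.prod_sum_type]
      simp only [hν₂def, Sum.elim_inl, Sum.elim_inr, Complex.ofReal_zero, map_zero, sub_zero,
        Finset.prod_const, Finset.card_univ, Fintype.card_fin]
      rfl
    have hprod : (∏ k : Fin a ⊕ Fin b, (X - C ((ν₁ k : ℝ) : ℂ)))
        = ∏ k : Fin a ⊕ Fin b, (X - C ((ν₂ k : ℝ) : ℂ)) := by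
      rw [← hP1, ← hP2, hpoly]
    have e1 : (∏ k : Fin a ⊕ Fin b, (X - C ((ν₁ k : ℝ) : ℂ)))
        = ((Multiset.map (fun k => ((ν₁ k : ℝ) : ℂ)) Finset.univ.val).map
            (fun r : ℂ => X - C r)).prod := by
      rw [Multiset.map_map]
      exact Finset.prod_eq_multiset_prod _ _
    have e2 : (∏ k : Fin a ⊕ Fin b, (X - C ((ν₂ k : ℝ) : ℂ)))
        = ((Multiset.map (fun k => ((ν₂ k : ℝ) : ℂ)) Finset.univ.val).map
            (fun r : ℂ => X - C r)).prod := by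
      rw [Multiset.map_map]
      exact Finset.prod_eq_multiset_prod _ _
    have hm := congrArg Polynomial.roots (e1.symm.trans (hprod.trans e2))
    rw [Polynomial.roots_multiset_prod_X_sub_C, Polynomial.roots_multiset_prod_X_sub_C] at hm
    have hmr : Multiset.map ν₁ Finset.univ.val = Multiset.map ν₂ Finset.univ.val := by
      apply Multiset.map_injective Complex.ofReal_injective
      rw [Multiset.map_map, Multiset.map_map]
      exact hm
    obtain ⟨π, hπ⟩ := aux_exists_perm ν₁ ν₂ hmr
    have hν₁0 : ∀ k, 0 ≤ ν₁ k := by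
      rintro (p | q)
      · exact h₁.eigenvalues_nonneg p
      · exact le_refl 0
    set u : Fin a ⊕ Fin b → Fin a → ℂ :=
      Sum.elim (fun p i => U i p) (fun _ _ => 0) with hudef
    set v : Fin a ⊕ Fin b → Fin b → ℂ :=
      Sum.elim (fun _ _ => 0) (fun q j => V j q) with hvdef
    set c : Fin a ⊕ Fin b → Fin b → ℂ :=
      fun k j => ((Real.sqrt (ν₁ k) : ℝ) : ℂ) * v (π k) j with hcdef
    have hUun : star U * U = 1 := Unitary.coe_star_mul_self h₁.1.eigenvectorUnitary
    have hVun : star V * V = 1 := Unitary.coe_star_mul_self h₂.1.eigenvectorUnitary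
    have hUo := aux_unitary_col_orthonormal U hUun
    have hVo := aux_unitary_col_orthonormal V hVun
    have huG : ∀ k k', ∑ i, u k i * (starRingEnd ℂ) (u k' i)
        = if k = k' then (if k.isLeft then 1 else 0) else 0 := by
      rintro (p | q) (p' | q')
      · have := hUo p' p
        rw [show ∑ i, u (Sum.inl p) i * (starRingEnd ℂ) (u (Sum.inl p') i)
            = ∑ i, (starRingEnd ℂ) (U i p') * U i p from
          Finset.sum_congr rfl fun i _ => by simp only [hudef, Sum.elim_inl]; ring, this]
        by_cases h : p = p' <;> simp [h, Sum.inl.injEq, eq_comm]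
      · simp [hudef]
      · simp [hudef]
      · simp [hudef, Sum.inr.injEq]
    have hvG : ∀ l l', ∑ j, v l j * (starRingEnd ℂ) (v l' j)
        = if l = l' then (if l.isRight then 1 else 0) else 0 := by
      rintro (p | q) (p' | q')
      · simp [hvdef, Sum.inl.injEq]
      · simp [hvdef]
      · simp [hvdef]
      · have := hVo q' q
        rw [show ∑ j, v (Sum.inr q) j * (starRingEnd ℂ) (v (Sum.inr q') j)
            = ∑ j, (starRingEnd ℂ) (V j q') * V j q from
          Finset.sum_congr rfl fun j _ => by simp only [hvdef, Sum.elim_inr]; ring, this]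
        by_cases h : q = q' <;> simp [h, Sum.inr.injEq, eq_comm]
    have hcG : ∀ k k', ∑ j, c k j * (starRingEnd ℂ) (c k' j)
        = if k = k' then ((ν₁ k : ℝ) : ℂ) else 0 := by
      intro k k'
      have hexp : ∑ j, c k j * (starRingEnd ℂ) (c k' j)
          = (((Real.sqrt (ν₁ k) : ℝ) : ℂ) * ((Real.sqrt (ν₁ k') : ℝ) : ℂ))
            * ∑ j, v (π k) j * (starRingEnd ℂ) (v (π k') j) := by
        rw [Finset.mul_sum]
        refine Finset.sum_congr rfl fun j _ => ?_
        simp only [hcdef, _root_.map_mul, Complex.conj_ofReal]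
        ring
      rw [hexp, hvG]
      by_cases hkk : k = k'
      · subst hkk
        rw [if_pos rfl, if_pos rfl]
        by_cases hr : (π k).isRight
        · rw [if_pos hr, mul_one, ← Complex.ofReal_mul, Real.mul_self_sqrt (hν₁0 k)]
        · have h0 : ν₁ k = 0 := by
            rcases hπk : π k with p | q
            · rw [hπ k, hπk]; rfl
            · rw [hπk] at hr; simp at hr
          rw [if_neg hr, mul_zero, h0]
          simp
      · rw [if_neg hkk, if_neg (fun h => hkk (π.injective h))]
        rw [mul_zero]
    set ψ : Fin a × Fin b → ℂ := fun p => ∑ k, u k p.1 * c k p.2 with hψdef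
    have key1 : ∀ i i', ρ₁ i i' = ∑ j, ψ (i, j) * (starRingEnd ℂ) (ψ (i', j)) := by
      intro i i'
      rw [show ∑ j, ψ (i, j) * (starRingEnd ℂ) (ψ (i', j))
          = ∑ k, ((ν₁ k : ℝ) : ℂ) * (u k i * (starRingEnd ℂ) (u k i')) from
        aux_sum_gram c _ hcG (fun k => u k i) (fun k => u k i')]
      rw [Fintype.sum_sum_type]
      have hinr : ∑ q : Fin b, ((ν₁ (Sum.inr q) : ℝ) : ℂ)
          * (u (Sum.inr q) i * (starRingEnd ℂ) (u (Sum.inr q) i')) = 0 := by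
        simp [hudef]
      rw [hinr, add_zero, aux_spectral_entry h₁.1 i i']
      refine Finset.sum_congr rfl fun p _ => ?_
      simp only [hudef, Sum.elim_inl, hν₁def]
      try ring
    have key2 : ∀ j j', ρ₂ j j' = ∑ i, ψ (i, j) * (starRingEnd ℂ) (ψ (i, j')) := by
      intro j j'
      have huG' : ∀ k k', ∑ i, u k i * (starRingEnd ℂ) (u k' i)
          = if k = k' then (if k.isLeft then (1 : ℂ) else 0) else 0 := huG
      have hψswap : ∀ (i : Fin a) (jj : Fin b), ψ (i, jj) = ∑ k, c k jj * u k i := by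
        intro i jj
        rw [hψdef]
        exact Finset.sum_congr rfl fun k _ => mul_comm _ _
      symm
      calc ∑ i, ψ (i, j) * (starRingEnd ℂ) (ψ (i, j'))
          = ∑ i, (∑ k, c k j * u k i) * (starRingEnd ℂ) (∑ k', c k' j' * u k' i) := by
            refine Finset.sum_congr rfl fun i _ => ?_
            rw [hψswap i j, hψswap i j']
        _ = ∑ k, (if k.isLeft then (1 : ℂ) else 0) * (c k j * (starRingEnd ℂ) (c k j')) :=
            aux_sum_gram u _ huG' (fun k => c k j) (fun k => c k j')
        _ = ∑ k, c k j * (starRingEnd ℂ) (c k j') := by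
            refine Finset.sum_congr rfl fun k _ => ?_
            rcases k with p | q
            · simp
            · have hc0 : c (Sum.inr q) j = 0 := by
                simp [hcdef, show ν₁ (Sum.inr q) = 0 from rfl]
              rw [hc0, zero_mul, mul_zero]
        _ = ∑ k, ((ν₁ k : ℝ) : ℂ) * (v (π k) j * (starRingEnd ℂ) (v (π k) j')) := by
            refine Finset.sum_congr rfl fun k _ => ?_
            simp only [hcdef, _root_.map_mul, Complex.conj_ofReal]
            rw [show ((Real.sqrt (ν₁ k) : ℝ) : ℂ) * v (π k) j
                * (((Real.sqrt (ν₁ k) : ℝ) : ℂ) * (starRingEnd ℂ) (v (π k) j'))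
                = (((Real.sqrt (ν₁ k) : ℝ) : ℂ) * ((Real.sqrt (ν₁ k) : ℝ) : ℂ))
                  * (v (π k) j * (starRingEnd ℂ) (v (π k) j')) from by ring,
              ← Complex.ofReal_mul, Real.mul_self_sqrt (hν₁0 k)]
        _ = ∑ k, ((ν₂ (π k) : ℝ) : ℂ) * (v (π k) j * (starRingEnd ℂ) (v (π k) j')) := by
            refine Finset.sum_congr rfl fun k _ => ?_
            rw [hπ k]
        _ = ∑ l, ((ν₂ l : ℝ) : ℂ) * (v l j * (starRingEnd ℂ) (v l j')) :=
            Equiv.sum_comp π (fun l => ((ν₂ l : ℝ) : ℂ) * (v l j * (starRingEnd ℂ) (v l j')))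
        _ = ρ₂ j j' := by
            rw [Fintype.sum_sum_type]
            have hinl : ∑ p : Fin a, ((ν₂ (Sum.inl p) : ℝ) : ℂ)
                * (v (Sum.inl p) j * (starRingEnd ℂ) (v (Sum.inl p) j')) = 0 := by
              simp [hν₂def]
            rw [hinl, zero_add, aux_spectral_entry h₂.1 j j']
            refine Finset.sum_congr rfl fun q _ => ?_
            simp only [hvdef, Sum.elim_inr, hν₂def]
            try ring
    refine ⟨ψ, ?_, key1, key2⟩
    have hcplx : ((∑ u : Fin a × Fin b, ‖ψ u‖ ^ 2 : ℝ) : ℂ) = 1 := by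
      push_cast
      calc ∑ u : Fin a × Fin b, (‖ψ u‖ : ℂ) ^ 2
          = ∑ u : Fin a × Fin b, ψ u * (starRingEnd ℂ) (ψ u) := by
            refine Finset.sum_congr rfl fun u _ => ?_
            rw [Complex.mul_conj']
        _ = ∑ i, ∑ j, ψ (i, j) * (starRingEnd ℂ) (ψ (i, j)) := Fintype.sum_prod_type _
        _ = ∑ i, ρ₁ i i := Finset.sum_congr rfl fun i _ => (key1 i i).symm
        _ = ρ₁.trace := rfl
        _ = 1 := ht₁
    exact_mod_cast hcplx
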